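/- For every c > 0 and every L̄ > 0 there exists a constant C such that for all ℓ ∈ (0, L̄] one has sin(Y_c(ℓ)) > 0, the function Λ_c(ℓ) := ℓ/(2·sin(Y_c(ℓ))) is differentiable, and | (d/dℓ)Λ_c(ℓ) | ≤ C·ℓ. -/

import Mathlib

open Real

/-- `Y_c(ℓ) = 2 arctan(e^c · tan((1/2) arctan(sinh(ℓ/2))))`; geometrically
`π/2 − Y_c(ℓ) = (ℓ/(2π)) Z_c(ℓ)` where `{Z_c(ℓ)}×S¹` is the circle in the standard collar
around a geodesic of length `ℓ` at hyperbolic distance `c` from the collar boundary. -/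
noncomputable def Yc (c ℓ : ℝ) : ℝ :=
  2 * Real.arctan (Real.exp c * Real.tan ((1 / 2) * Real.arctan (Real.sinh (ℓ / 2))))

lemma aux_sinh_le_mul_cosh {x : ℝ} (hx : 0 ≤ x) : Real.sinh x ≤ x * Real.cosh x := by
  have key : ∀ y : ℝ, HasDerivAt (fun y => y * Real.cosh y - Real.sinh y)
      (y * Real.sinh y) y := by
    intro y
    have h := ((hasDerivAt_id y).mul (Real.hasDerivAt_cosh y)).sub (Real.hasDerivAt_sinh y)
    refine h.congr_deriv ?_
    simp only [id_eq]; ring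
  have mono : Monotone (fun y => y * Real.cosh y - Real.sinh y) := by
    apply monotone_of_deriv_nonneg (fun y => (key y).differentiableAt)
    intro y
    rw [(key y).deriv]
    rcases le_or_gt 0 y with h | h
    · exact mul_nonneg h (Real.sinh_nonneg_iff.mpr h)
    · exact mul_nonneg_iff.mpr (Or.inr ⟨h.le, by simpa using Real.sinh_le_sinh.mpr h.le⟩)
  have h0 := mono hx
  simp only [Real.cosh_zero, Real.sinh_zero, mul_zero, zero_mul, sub_zero, zero_sub] at h0
  linarith [h0]

lemma aux_le_sinh_mul_cosh {x : ℝ} (hx : 0 ≤ x) : x ≤ Real.sinh x * Real.cosh x := by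
  have h2 : 2 * x ≤ Real.sinh (2 * x) := by
    rcases eq_or_lt_of_le hx with h | h
    · simp [← h]
    · exact (Real.self_lt_sinh_iff.mpr (by linarith)).le
  rw [Real.sinh_two_mul] at h2
  linarith

/-- The key closed form: `sin (Yc c ℓ) = 2u/(1+u²)` with `u = eᶜ · tanh(ℓ/4)`. -/
lemma sin_Yc_eq (c l : ℝ) :
    Real.sin (Yc c l) =
      2 * (Real.exp c * (Real.sinh (l / 4) / Real.cosh (l / 4))) /
        (1 + (Real.exp c * (Real.sinh (l / 4) / Real.cosh (l / 4))) ^ 2) := by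
  set s := Real.sinh (l / 4) with hs
  set k := Real.cosh (l / 4) with hk
  have hkpos : 0 < k := by rw [hk]; exact Real.cosh_pos _
  have hk1 : k ^ 2 - s ^ 2 = 1 := Real.cosh_sq_sub_sinh_sq (l / 4)
  have hlt : s < k := by nlinarith [Real.exp_pos (-(l / 4)), Real.cosh_sub_sinh (l / 4)]
  have hgt : -k < s := by nlinarith [Real.exp_pos (l / 4), Real.cosh_add_sinh (l / 4)]
  set t := s / k with ht
  have ht1 : t < 1 := (div_lt_one hkpos).mpr hlt
  have ht2 : -1 < t := by rw [ht, lt_div_iff₀ hkpos]; linarith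
  have harct1 : Real.arctan t < π / 4 := by
    calc Real.arctan t < Real.arctan 1 := Real.arctan_strictMono ht1
    _ = π / 4 := Real.arctan_one
  have harct2 : -(π / 4) < Real.arctan t := by
    have : Real.arctan (-1) < Real.arctan t := Real.arctan_strictMono ht2
    simpa [Real.arctan_neg, Real.arctan_one] using this
  have htne : 1 - t ^ 2 ≠ 0 := by nlinarith
  have htan : Real.tan (2 * Real.arctan t) = Real.sinh (l / 2) := by
    rw [Real.tan_two_mul, Real.tan_arctan]
    have hsl : Real.sinh (l / 2) = 2 * s * k := by
      rw [show l / 2 = 2 * (l / 4) by ring, Real.sinh_two_mul, hs, hk]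
    have hden : 1 - t ^ 2 = 1 / k ^ 2 := by
      rw [ht, div_pow]
      field_simp
      linarith
    rw [hsl, hden, ht]
    field_simp
  have harctan : Real.arctan (Real.sinh (l / 2)) = 2 * Real.arctan t := by
    rw [← htan, Real.arctan_tan (by linarith) (by linarith)]
  have hhalf : Real.tan ((1 / 2) * Real.arctan (Real.sinh (l / 2))) = t := by
    rw [harctan, show (1 / 2 : ℝ) * (2 * Real.arctan t) = Real.arctan t by ring,
      Real.tan_arctan]
  rw [Yc, hhalf]
  set u := Real.exp c * t with hu
  have hsq : Real.sqrt (1 + u ^ 2) ^ 2 = 1 + u ^ 2 := Real.sq_sqrt (by positivity)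
  have hsqne : Real.sqrt (1 + u ^ 2) ≠ 0 := by positivity
  rw [Real.sin_two_mul, Real.sin_arctan, Real.cos_arctan]
  set r := Real.sqrt (1 + u ^ 2) with hr
  have hrne : r ≠ 0 := hsqne
  rw [← hsq]
  field_simp

/-- The half-length `Λ_c(ℓ) = ℓ/(2 sin(Y_c(ℓ)))` of the circle at distance `c` from the
collar boundary is well defined and differentiable with `|Λ_c′(ℓ)| ≤ C ℓ` for
`ℓ ∈ (0, L̄]`. -/
theorem circle_length_derivative_bound (c : ℝ) (hc : 0 < c) (Lbar : ℝ) (hL : 0 < Lbar) :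
    ∃ C : ℝ, ∀ ℓ : ℝ, ℓ ∈ Set.Ioc 0 Lbar →
      0 < Real.sin (Yc c ℓ) ∧
      DifferentiableAt ℝ (fun l => l / (2 * Real.sin (Yc c l))) ℓ ∧
      |deriv (fun l => l / (2 * Real.sin (Yc c l))) ℓ| ≤ C * ℓ := by
  set F : ℝ → ℝ := fun l =>
    Real.exp (-c) * (l * Real.cosh (l / 4) / (4 * Real.sinh (l / 4))) +
      Real.exp c * (l * Real.sinh (l / 4) / (4 * Real.cosh (l / 4))) with hF
  refine ⟨(Real.exp (-c) + Real.exp c) / 8, ?_⟩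
  rintro ℓ ⟨hl0, hlL⟩
  -- basic positivity
  have hx0 : 0 < ℓ / 4 := by linarith
  set s := Real.sinh (ℓ / 4) with hsdef
  set k := Real.cosh (ℓ / 4) with hkdef
  have hspos : 0 < s := Real.sinh_pos_iff.mpr hx0
  have hkpos : 0 < k := by rw [hkdef]; exact Real.cosh_pos _
  have hk1 : k ^ 2 - s ^ 2 = 1 := Real.cosh_sq_sub_sinh_sq (ℓ / 4)
  have hupos : 0 < Real.exp c * (s / k) := by positivity
  have hsin : 0 < Real.sin (Yc c ℓ) := by
    rw [sin_Yc_eq, ← hsdef, ← hkdef]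
    positivity
  -- eventual equality with F on a neighborhood of ℓ
  have hEq : (fun l => l / (2 * Real.sin (Yc c l))) =ᶠ[nhds ℓ] F := by
    filter_upwards [Ioi_mem_nhds hl0] with l hl
    have hl0' : (0 : ℝ) < l := hl
    have hx0' : 0 < l / 4 := by linarith
    have hs' : 0 < Real.sinh (l / 4) := Real.sinh_pos_iff.mpr hx0'
    have hk' : 0 < Real.cosh (l / 4) := Real.cosh_pos _
    have hk1' : Real.cosh (l / 4) ^ 2 - Real.sinh (l / 4) ^ 2 = 1 :=
      Real.cosh_sq_sub_sinh_sq (l / 4)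
    have he : (0:ℝ) < Real.exp c := Real.exp_pos c
    rw [sin_Yc_eq]
    simp only [hF, Real.exp_neg]
    set S := Real.sinh (l / 4) with hS
    set K := Real.cosh (l / 4) with hK
    have h1 : (0:ℝ) < 1 + (Real.exp c * (S / K)) ^ 2 := by positivity
    have h2 : (0:ℝ) < Real.exp c * (S / K) := by positivity
    field_simp
    ring
  -- derivative of F
  have h14 : HasDerivAt (fun l : ℝ => l / 4) (1 / 4 : ℝ) ℓ := (hasDerivAt_id ℓ).div_const 4
  have hsinh : HasDerivAt (fun l : ℝ => Real.sinh (l / 4)) (k * (1 / 4)) ℓ :=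
    by have := (Real.hasDerivAt_sinh (ℓ / 4)).comp ℓ h14; exact this
  have hcosh : HasDerivAt (fun l : ℝ => Real.cosh (l / 4)) (s * (1 / 4)) ℓ :=
    by have := (Real.hasDerivAt_cosh (ℓ / 4)).comp ℓ h14; exact this
  have hA : HasDerivAt (fun l : ℝ => l * Real.cosh (l / 4)) (k + ℓ * (s * (1 / 4))) ℓ := by
    exact ((hasDerivAt_id ℓ).mul hcosh).congr_deriv (by simp [hkdef])
  have hB : HasDerivAt (fun l : ℝ => 4 * Real.sinh (l / 4)) (4 * (k * (1 / 4))) ℓ :=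
    hsinh.const_mul 4
  have hA2 : HasDerivAt (fun l : ℝ => l * Real.sinh (l / 4)) (s + ℓ * (k * (1 / 4))) ℓ := by
    exact ((hasDerivAt_id ℓ).mul hsinh).congr_deriv (by simp [hsdef])
  have hB2 : HasDerivAt (fun l : ℝ => 4 * Real.cosh (l / 4)) (4 * (s * (1 / 4))) ℓ :=
    hcosh.const_mul 4
  have hBne : (4 : ℝ) * s ≠ 0 := by positivity
  have hB2ne : (4 : ℝ) * k ≠ 0 := by positivity
  have hg1 : HasDerivAt (fun l : ℝ => l * Real.cosh (l / 4) / (4 * Real.sinh (l / 4)))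
      (((k + ℓ * (s * (1 / 4))) * (4 * s) - ℓ * k * (4 * (k * (1 / 4)))) / (4 * s) ^ 2) ℓ :=
    hA.div hB hBne
  have hg2 : HasDerivAt (fun l : ℝ => l * Real.sinh (l / 4) / (4 * Real.cosh (l / 4)))
      (((s + ℓ * (k * (1 / 4))) * (4 * k) - ℓ * s * (4 * (s * (1 / 4)))) / (4 * k) ^ 2) ℓ :=
    hA2.div hB2 hB2ne
  have hFd : HasDerivAt F
      (Real.exp (-c) * ((s * k - ℓ / 4) / (4 * s ^ 2)) +
        Real.exp c * ((s * k + ℓ / 4) / (4 * k ^ 2))) ℓ := by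
    have := (hg1.const_mul (Real.exp (-c))).add (hg2.const_mul (Real.exp c))
    refine this.congr_deriv ?_
    have e1 : ((k + ℓ * (s * (1 / 4))) * (4 * s) - ℓ * k * (4 * (k * (1 / 4)))) / (4 * s) ^ 2
        = (s * k - ℓ / 4) / (4 * s ^ 2) := by
      rw [div_eq_div_iff (by positivity) (by positivity)]
      linear_combination (-(4:ℝ) * ℓ * s ^ 2) * hk1
    have e2 : ((s + ℓ * (k * (1 / 4))) * (4 * k) - ℓ * s * (4 * (s * (1 / 4)))) / (4 * k) ^ 2
        = (s * k + ℓ / 4) / (4 * k ^ 2) := by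
      rw [div_eq_div_iff (by positivity) (by positivity)]
      linear_combination ((4:ℝ) * ℓ * k ^ 2) * hk1
    rw [e1, e2]
  have hdiff : DifferentiableAt ℝ (fun l => l / (2 * Real.sin (Yc c l))) ℓ :=
    (hEq.differentiableAt_iff).mpr hFd.differentiableAt
  refine ⟨hsin, hdiff, ?_⟩
  rw [hEq.deriv_eq, hFd.deriv]
  -- inequalities
  set x := ℓ / 4 with hxdef
  have hP1 : s ≤ x * k := aux_sinh_le_mul_cosh hx0.le
  have hP2 : x ≤ s * k := aux_le_sinh_mul_cosh hx0.le
  have hT1 : 0 ≤ (s * k - x) / (4 * s ^ 2) := by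
    apply div_nonneg (by linarith) (by positivity)
  have hT2 : 0 ≤ (s * k + x) / (4 * k ^ 2) := by
    apply div_nonneg (by positivity) (by positivity)
  have hT1' : (s * k - x) / (4 * s ^ 2) ≤ x / 4 := by
    rw [div_le_div_iff₀ (by positivity) (by norm_num)]
    nlinarith [hk1]
  have hT2' : (s * k + x) / (4 * k ^ 2) ≤ x / 2 := by
    rw [div_le_div_iff₀ (by positivity) (by norm_num)]
    nlinarith [hk1, sq_nonneg k]
  have hec : (0:ℝ) < Real.exp (-c) := Real.exp_pos _
  have hec' : (0:ℝ) < Real.exp c := Real.exp_pos _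
  rw [abs_of_nonneg (by positivity)]
  have hx : x = ℓ / 4 := rfl
  calc Real.exp (-c) * ((s * k - x) / (4 * s ^ 2)) + Real.exp c * ((s * k + x) / (4 * k ^ 2))
      ≤ Real.exp (-c) * (x / 4) + Real.exp c * (x / 2) := by
        gcongr
    _ ≤ (Real.exp (-c) + Real.exp c) / 8 * ℓ := by
        rw [hx]; ring_nf; nlinarith [hec.le, hec'.le, hl0.le]
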